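/- arXiv:2502.02669 — 3 statements merged into one kernel-verified Lean document; each statement's English description precedes it below -/
import Mathlib

section
/- Let V: [t_*, t₀+T) → ℝ be a positive differentiable function satisfying V'(t) ≤ −(ε₁/λ) μ^{1+m}(t) V(t) for all t ∈ [t_*, t₀+T), where ε₁, λ > 0, m ≥ 1, and μ(t) = T/(T+t₀−t). Then V(t) ≤ V(t_*) · exp(−(ε₁ T/(m λ)) (μ^m(t) − μ^m(t_*))) for all t ∈ [t_*, t₀+T); in particular V(t) → 0 as t → t₀ + T. -/
open Set Filter Real

theorem lyapunov_decay (t₀ T : ℝ) (ht₀ : 0 ≤ t₀) (hT : 0 < T)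
    (μ : ℝ → ℝ) (hμ : ∀ t, μ t = T / (T + t₀ - t))
    (tS : ℝ) (htS : tS ∈ Set.Ico t₀ (t₀ + T))
    (m : ℕ) (hm : 1 ≤ m) (ε₁ lam : ℝ) (hε₁ : 0 < ε₁) (hlam : 0 < lam)
    (V V' : ℝ → ℝ)
    (hVpos : ∀ t ∈ Set.Ico tS (t₀ + T), 0 < V t)
    (hVderiv : ∀ t ∈ Set.Ico tS (t₀ + T), HasDerivAt V (V' t) t)
    (hVle : ∀ t ∈ Set.Ico tS (t₀ + T), V' t ≤ -(ε₁ / lam) * μ t ^ (1 + m) * V t) :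
    (∀ t ∈ Set.Ico tS (t₀ + T),
      V t ≤ V tS * Real.exp (-(ε₁ * T / (m * lam)) * (μ t ^ m - μ tS ^ m))) ∧
    Tendsto V (nhdsWithin (t₀ + T) (Set.Iio (t₀ + T))) (nhds 0) := by
  obtain ⟨k, rfl⟩ : ∃ k, m = k + 1 := ⟨m - 1, (Nat.succ_pred_eq_of_pos hm).symm⟩
  set m := k + 1 with hmk
  have hmR : (0:ℝ) < (m:ℝ) := by positivity
  set c : ℝ := ε₁ * T / (m * lam) with hc
  have hcpos : 0 < c := by positivity
  set K : ℝ := (T / (T + t₀ - tS)) ^ m with hK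
  set g : ℝ → ℝ := fun t => c * ((T / (T + t₀ - t)) ^ m - K) with hg
  set W : ℝ → ℝ := fun t => V t * Real.exp (g t) with hWdef
  -- derivative facts on the interval
  have hgd : ∀ t ∈ Set.Ico tS (t₀ + T),
      HasDerivAt g ((ε₁ / lam) * μ t ^ (1 + m)) t := by
    intro t ht
    have hu : 0 < T + t₀ - t := by linarith [ht.2]
    have hune : T + t₀ - t ≠ 0 := ne_of_gt hu
    have h1 : HasDerivAt (fun t => T + t₀ - t) (-1) t := by
      simpa using (hasDerivAt_id t).const_sub (T + t₀)
    have h2 : HasDerivAt (fun t => T / (T + t₀ - t)) (T / (T + t₀ - t) ^ 2) t := by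
      simpa [div_eq_mul_inv] using (h1.inv hune).const_mul T
    have h3 := ((h2.pow m).sub_const K).const_mul c
    refine h3.congr_deriv ?_
    rw [hμ t, hc]
    simp only [hmk, Nat.add_sub_cancel]
    field_simp
    have hinv : (T + t₀ - t) * (T + t₀ - t)⁻¹ = 1 := mul_inv_cancel₀ hune
    linear_combination (-(T ^ 2 * T ^ k * ((T + t₀ - t)⁻¹) ^ k) * ((T + t₀ - t) * (T + t₀ - t)⁻¹ + 1)) * hinv
  have hWd : ∀ t ∈ Set.Ico tS (t₀ + T),
      HasDerivAt W (V' t * Real.exp (g t) +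
        V t * (Real.exp (g t) * ((ε₁ / lam) * μ t ^ (1 + m)))) t := by
    intro t ht
    exact (hVderiv t ht).mul ((hgd t ht).exp)
  have hW'le : ∀ t ∈ Set.Ico tS (t₀ + T),
      V' t * Real.exp (g t) +
        V t * (Real.exp (g t) * ((ε₁ / lam) * μ t ^ (1 + m))) ≤ 0 := by
    intro t ht
    have he : (0:ℝ) < Real.exp (g t) := Real.exp_pos _
    have h1 := hVle t ht
    nlinarith [mul_le_mul_of_nonneg_right h1 he.le]
  -- antitonicity of W, hence the bound
  have hbound : ∀ t ∈ Set.Ico tS (t₀ + T), W t ≤ W tS := by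
    intro t ht
    rcases eq_or_lt_of_le ht.1 with h | h
    · rw [← h]
    · have hsub : Set.Icc tS t ⊆ Set.Ico tS (t₀ + T) := fun x hx =>
        ⟨hx.1, lt_of_le_of_lt hx.2 ht.2⟩
      have hanti : AntitoneOn W (Set.Icc tS t) := by
        apply antitoneOn_of_deriv_nonpos (convex_Icc tS t)
        · exact fun x hx => ((hWd x (hsub hx)).continuousAt).continuousWithinAt
        · intro x hx
          rw [interior_Icc] at hx
          exact ((hWd x (hsub ⟨hx.1.le, hx.2.le⟩)).differentiableAt).differentiableWithinAt
        · intro x hx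
          rw [interior_Icc] at hx
          have hx' := hsub ⟨hx.1.le, hx.2.le⟩
          rw [(hWd x hx').deriv]
          exact hW'le x hx'
      exact hanti (Set.left_mem_Icc.mpr ht.1) (Set.right_mem_Icc.mpr ht.1) ht.1
  have hmain : ∀ t ∈ Set.Ico tS (t₀ + T),
      V t ≤ V tS * Real.exp (-(ε₁ * T / (m * lam)) * (μ t ^ m - μ tS ^ m)) := by
    intro t ht
    have h := hbound t ht
    have hgtS : g tS = 0 := by simp [hg, hK]
    rw [hWdef] at h
    simp only [hgtS, Real.exp_zero, mul_one] at h
    have he : (0:ℝ) < Real.exp (g t) := Real.exp_pos _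
    have hle : V t ≤ V tS * Real.exp (-(g t)) := by
      rw [Real.exp_neg, ← div_eq_mul_inv, le_div_iff₀ he]
      exact h
    convert hle using 2
    rw [hg, hμ t, hμ tS, hc, hK]
    ring
  refine ⟨hmain, ?_⟩
  -- limit part
  have hμtop : Tendsto (fun t => (T / (T + t₀ - t)) ^ m - μ tS ^ m)
      (nhdsWithin (t₀ + T) (Set.Iio (t₀ + T))) atTop := by
    apply tendsto_atTop_add_const_right
    apply (tendsto_pow_atTop (by omega : m ≠ 0)).comp
    have h1 : Tendsto (fun t => T + t₀ - t) (nhdsWithin (t₀ + T) (Set.Iio (t₀ + T)))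
        (nhdsWithin 0 (Set.Ioi 0)) := by
      apply tendsto_nhdsWithin_of_tendsto_nhds_of_eventually_within
      · have hcont : Continuous (fun t : ℝ => T + t₀ - t) := by continuity
        have h := hcont.tendsto (t₀ + T)
        have h0 : T + t₀ - (t₀ + T) = 0 := by ring
        rw [h0] at h
        exact h.mono_left nhdsWithin_le_nhds
      · filter_upwards [self_mem_nhdsWithin] with t ht
        simp only [Set.mem_Iio] at ht
        simp only [Set.mem_Ioi]
        linarith
    have h2 : Tendsto (fun u : ℝ => T / u) (nhdsWithin 0 (Set.Ioi 0)) atTop := by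
      simpa [div_eq_mul_inv] using tendsto_inv_nhdsGT_zero.const_mul_atTop hT
    exact h2.comp h1
  have hBtend : Tendsto (fun t => V tS * Real.exp (-(ε₁ * T / (m * lam)) * ((T / (T + t₀ - t)) ^ m - μ tS ^ m)))
      (nhdsWithin (t₀ + T) (Set.Iio (t₀ + T))) (nhds 0) := by
    rw [show (0:ℝ) = V tS * 0 by ring]
    apply Tendsto.const_mul
    apply Real.tendsto_exp_atBot.comp
    have h1 := hμtop.const_mul_atTop (show (0:ℝ) < ε₁ * T / (m * lam) by positivity)
    simp only [neg_mul]
    exact tendsto_neg_atTop_atBot.comp h1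
  have hEv : ∀ᶠ t in nhdsWithin (t₀ + T) (Set.Iio (t₀ + T)), t ∈ Set.Ico tS (t₀ + T) := by
    have hmem : Set.Ioo tS (t₀ + T) ∈ nhdsWithin (t₀ + T) (Set.Iio (t₀ + T)) := by
      apply mem_nhdsWithin.mpr
      exact ⟨Set.Ioi tS, isOpen_Ioi, htS.2, fun x hx => ⟨hx.1, hx.2⟩⟩
    filter_upwards [hmem] with t ht
    exact ⟨ht.1.le, ht.2⟩
  apply tendsto_of_tendsto_of_tendsto_of_le_of_le' (tendsto_const_nhds) hBtend
  · filter_upwards [hEv] with t ht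
    exact (hVpos t ht).le
  · filter_upwards [hEv] with t ht
    have h := hmain t ht
    rwa [hμ t] at h
end

section
/- Let L be the Laplacian of a strongly connected weighted digraph, r the unique positive left null row vector of L with r 1_N = N, and R = diag(r₁,…,r_N). Then the matrix L̂ := R L + Lᵀ R is symmetric positive semi-definite and satisfies 1_Nᵀ L̂ = 0 and L̂ 1_N = 0. -/
open Matrix

theorem mirror_laplacian_psd (N : ℕ) (hN : 1 ≤ N)
    (a : Fin N → Fin N → ℝ)
    (ha_nonneg : ∀ i j, 0 ≤ a i j)
    (ha_diag : ∀ i, a i i = 0)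
    (hconn : ∀ i j : Fin N, i ≠ j → Relation.TransGen (fun p q => 0 < a p q) i j)
    (L : Matrix (Fin N) (Fin N) ℝ)
    (hL : ∀ i j, L i j = if i = j then (∑ k, a i k) else -a i j)
    (r : Fin N → ℝ) (hr_pos : ∀ i, 0 < r i)
    (hrL : Matrix.vecMul r L = 0) (hr_sum : (∑ i, r i) = N)
    (R : Matrix (Fin N) (Fin N) ℝ) (hR : R = Matrix.diagonal r)
    (Lhat : Matrix (Fin N) (Fin N) ℝ) (hLhat : Lhat = R * L + Lᵀ * R) :
    Lhat.IsSymm ∧ Lhat.PosSemidef ∧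
    Matrix.vecMul (fun _ => (1 : ℝ)) Lhat = 0 ∧
    Lhat.mulVec (fun _ => (1 : ℝ)) = 0 := by
  -- entrywise descriptions
  have hL' : ∀ i j, L i j = (if i = j then (∑ k, a i k) else 0) - a i j := by
    intro i j
    rw [hL]
    by_cases h : i = j
    · subst h; simp [ha_diag]
    · simp [h]
  have hE : ∀ i j, Lhat i j = r i * L i j + L j i * r j := by
    intro i j
    simp [hLhat, hR, Matrix.mul_apply, Matrix.add_apply, Matrix.diagonal,
      Matrix.transpose_apply, Finset.sum_ite_eq, Finset.sum_ite_eq', ite_mul, mul_ite]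
  -- row sums of L applied to a vector
  have hrow : ∀ (x : Fin N → ℝ) (i : Fin N),
      (∑ j, L i j * x j) = ∑ k, a i k * (x i - x k) := by
    intro x i
    have h1 : (∑ j, L i j * x j)
        = (∑ j, (if i = j then (∑ k, a i k) * x j else 0)) - ∑ j, a i j * x j := by
      rw [← Finset.sum_sub_distrib]
      apply Finset.sum_congr rfl; intro j _
      rw [hL']
      by_cases h : i = j <;> simp [h] <;> ring
    rw [h1, Finset.sum_ite_eq]
    simp [mul_sub, Finset.sum_sub_distrib, Finset.sum_mul]
  -- column identity from r L = 0
  have hcol : ∀ k, (∑ i, r i * a i k) = r k * ∑ m, a k m := by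
    intro k
    have h0 := congrFun hrL k
    simp only [Matrix.vecMul, dotProduct, Pi.zero_apply] at h0
    have h1 : (∑ i, r i * L i k) = r k * (∑ m, a k m) - ∑ i, r i * a i k := by
      simp only [hL', mul_sub, Finset.sum_sub_distrib, mul_ite, mul_zero,
        Finset.sum_ite_eq, Finset.sum_ite_eq', Finset.mem_univ, if_true]
    rw [h1] at h0
    linarith
  -- L 1 = 0
  have hL1 : ∀ i, (∑ j, L i j) = 0 := by
    intro i
    have := hrow (fun _ => (1 : ℝ)) i
    simpa using this
  -- quadratic form identity
  have hQ : ∀ x : Fin N → ℝ,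
      dotProduct x (Lhat *ᵥ x) = ∑ i, ∑ k, r i * a i k * (x i - x k) ^ 2 := by
    intro x
    have hlhs : dotProduct x (Lhat *ᵥ x)
        = ∑ i, ∑ j, (r i * L i j + L j i * r j) * (x i * x j) := by
      simp only [dotProduct, Matrix.mulVec, hE, Finset.mul_sum]
      apply Finset.sum_congr rfl; intro i _
      apply Finset.sum_congr rfl; intro j _
      ring
    rw [hlhs]
    have hsplit : (∑ i, ∑ j, (r i * L i j + L j i * r j) * (x i * x j))
        = 2 * ∑ i, ∑ j, r i * L i j * (x i * x j) := by
      simp only [add_mul, Finset.sum_add_distrib]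
      rw [Finset.sum_comm (f := fun i j => L j i * r j * (x i * x j))]
      have : (∑ j, ∑ i, L j i * r j * (x i * x j))
          = ∑ i, ∑ j, r i * L i j * (x i * x j) := by
        apply Finset.sum_congr rfl; intro i _
        apply Finset.sum_congr rfl; intro j _
        ring
      rw [this]; ring
    rw [hsplit]
    have hA : (∑ i, ∑ j, r i * L i j * (x i * x j))
        = ∑ i, ∑ k, r i * a i k * (x i * (x i - x k)) := by
      apply Finset.sum_congr rfl; intro i _
      have : (∑ j, r i * L i j * (x i * x j))
          = r i * x i * ∑ j, L i j * x j := by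
        rw [Finset.mul_sum]
        apply Finset.sum_congr rfl; intro j _; ring
      rw [this, hrow, Finset.mul_sum]
      apply Finset.sum_congr rfl; intro k _; ring
    rw [hA]
    -- remains: 2 * ∑∑ r a x(x-y) = ∑∑ r a (x-y)^2
    have hxx : (∑ i, ∑ k, r i * a i k * (x k) ^ 2)
        = ∑ i, ∑ k, r i * a i k * (x i) ^ 2 := by
      rw [Finset.sum_comm]
      have : (∑ k, ∑ i, r i * a i k * (x k) ^ 2)
          = ∑ k, (∑ i, r i * a i k) * (x k) ^ 2 := by
        apply Finset.sum_congr rfl; intro k _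
        rw [Finset.sum_mul]
      rw [this]
      apply Finset.sum_congr rfl; intro k _
      rw [hcol, mul_assoc, Finset.sum_mul, Finset.mul_sum]
      apply Finset.sum_congr rfl; intro m _; ring
    have expand : ∀ i k, r i * a i k * (x i - x k) ^ 2
        = 2 * (r i * a i k * (x i * (x i - x k)))
          - (r i * a i k * (x i) ^ 2 - r i * a i k * (x k) ^ 2) := by
      intro i k; ring
    calc 2 * ∑ i, ∑ k, r i * a i k * (x i * (x i - x k))
        = (∑ i, ∑ k, 2 * (r i * a i k * (x i * (x i - x k))))
          - ((∑ i, ∑ k, r i * a i k * (x i) ^ 2)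
            - (∑ i, ∑ k, r i * a i k * (x k) ^ 2)) := by
          rw [hxx]; simp [Finset.mul_sum]
      _ = ∑ i, ∑ k, r i * a i k * (x i - x k) ^ 2 := by
          simp only [expand, Finset.sum_sub_distrib]
  -- symmetry
  have hsym : Lhat.IsSymm := by
    apply Matrix.IsSymm.ext
    intro i j
    rw [hE, hE]; ring
  have hherm : Lhat.IsHermitian := by
    have : Lhatᴴ = Lhatᵀ := by ext i j; simp
    unfold Matrix.IsHermitian
    rw [this]; exact hsym
  -- Lhat 1 = 0
  have hmul1 : Lhat *ᵥ (fun _ => (1 : ℝ)) = 0 := by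
    funext i
    simp only [Matrix.mulVec, dotProduct, mul_one, Pi.zero_apply]
    have : (∑ j, Lhat i j) = ∑ j, (r i * L i j + L j i * r j) := by
      apply Finset.sum_congr rfl; intro j _; rw [hE]
    rw [this, Finset.sum_add_distrib]
    have h1 : (∑ j, r i * L i j) = 0 := by
      rw [← Finset.mul_sum, hL1, mul_zero]
    have h2 : (∑ j, L j i * r j) = 0 := by
      have h0 := congrFun hrL i
      simp only [Matrix.vecMul, dotProduct, Pi.zero_apply] at h0
      rw [← h0]
      apply Finset.sum_congr rfl; intro j _; ring
    rw [h1, h2, add_zero]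
  have hvec1 : Matrix.vecMul (fun _ => (1 : ℝ)) Lhat = 0 := by
    funext j
    have := congrFun hmul1 j
    simp only [Matrix.mulVec, Matrix.vecMul, dotProduct, mul_one, one_mul,
      Pi.zero_apply] at this ⊢
    rw [← this]
    apply Finset.sum_congr rfl; intro k _
    have := congrFun (congrFun hsym k) j
    simp only [Matrix.transpose_apply] at this
    rw [this]
  refine ⟨hsym, Matrix.posSemidef_iff_dotProduct_mulVec.mpr ⟨hherm, ?_⟩, hvec1, hmul1⟩
  intro x
  have hstar : (star x : Fin N → ℝ) = x := by funext i; simp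
  rw [hstar, hQ]
  apply Finset.sum_nonneg; intro i _
  apply Finset.sum_nonneg; intro k _
  have := hr_pos i
  have := ha_nonneg i k
  positivity
end

section
/- Let P ∈ ℝ^{n×n} be symmetric positive definite and suppose a differentiable curve ζ: [t_*, t₀+T) → ℝ^n satisfies d/dt (ζ(t)ᵀ P ζ(t)) ≤ −ε₁ μ^{1+m}(t) ‖ζ(t)‖² with ε₁ > 0, m ≥ 1, μ(t) = T/(T+t₀−t). Then ‖ζ(t)‖ ≤ sqrt(λ_max(P)/λ_min(P)) ‖ζ(t_*)‖ exp(−(ε₁ T/(2 m λ_max(P))) (μ^m(t) − μ^m(t_*))) for all t ∈ [t_*, t₀+T), and consequently ζ(t) → 0 as t → t₀ + T. -/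
open Set Filter Matrix

lemma quad_form_bounds {n : ℕ} (P : Matrix (Fin n) (Fin n) ℝ) (hP : P.IsHermitian)
    (x : EuclideanSpace ℝ (Fin n)) :
    (⨅ i, hP.eigenvalues i) * ‖x‖ ^ 2 ≤ (inner ℝ x ((Matrix.toEuclideanLin P) x) : ℝ) ∧
    (inner ℝ x ((Matrix.toEuclideanLin P) x) : ℝ) ≤ (⨆ i, hP.eigenvalues i) * ‖x‖ ^ 2 := by
  rcases Nat.eq_zero_or_pos n with rfl | hn
  · have hx : x = 0 := Subsingleton.elim _ _
    simp [hx]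
  haveI : Nonempty (Fin n) := ⟨⟨0, hn⟩⟩
  set b := hP.eigenvectorBasis with hb
  have hsym : (Matrix.toEuclideanLin P).IsSymmetric := Matrix.isHermitian_iff_isSymmetric.1 hP
  have hLb : ∀ i, Matrix.toEuclideanLin P (b i) = hP.eigenvalues i • b i := by
    intro i
    apply (WithLp.equiv 2 (Fin n → ℝ)).injective
    have := hP.mulVec_eigenvectorBasis i
    simpa [Matrix.toEuclideanLin_apply] using this
  have hrepr : ∀ i, b.repr (Matrix.toEuclideanLin P x) i = hP.eigenvalues i * b.repr x i := by
    intro i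
    rw [b.repr_apply_apply, b.repr_apply_apply, ← hsym (b i) x, hLb i]
    simp [real_inner_smul_left, PiLp.inner_apply, RCLike.inner_apply, Finset.mul_sum, mul_assoc]
    exact Finset.sum_congr rfl fun j _ => by ring
  have hinner : (inner ℝ x ((Matrix.toEuclideanLin P) x) : ℝ)
      = ∑ i, hP.eigenvalues i * (b.repr x i) ^ 2 := by
    rw [← b.repr.inner_map_map x (Matrix.toEuclideanLin P x)]
    rw [PiLp.inner_apply]
    refine Finset.sum_congr rfl fun i _ => ?_
    rw [hrepr i]
    simp [RCLike.inner_apply]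
    ring
  have hnorm : ‖x‖ ^ 2 = ∑ i, (b.repr x i) ^ 2 := by
    rw [← b.repr.norm_map x, ← real_inner_self_eq_norm_sq, PiLp.inner_apply]
    simp [RCLike.inner_apply]
  constructor
  · rw [hinner, hnorm, Finset.mul_sum]
    refine Finset.sum_le_sum fun i _ => ?_
    exact mul_le_mul_of_nonneg_right (ciInf_le (Finite.bddBelow_range _) i) (sq_nonneg _)
  · rw [hinner, hnorm, Finset.mul_sum]
    refine Finset.sum_le_sum fun i _ => ?_
    exact mul_le_mul_of_nonneg_right (le_ciSup (Finite.bddAbove_range _) i) (sq_nonneg _)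

theorem quadratic_lyapunov_decay (t₀ T : ℝ) (ht₀ : 0 ≤ t₀) (hT : 0 < T)
    (μ : ℝ → ℝ) (hμ : ∀ t, μ t = T / (T + t₀ - t))
    (tS : ℝ) (htS : tS ∈ Set.Ico t₀ (t₀ + T))
    (m : ℕ) (hm : 1 ≤ m) (ε₁ : ℝ) (hε₁ : 0 < ε₁)
    (n : ℕ) (hn : 0 < n)
    (P : Matrix (Fin n) (Fin n) ℝ) (hP : P.IsHermitian) (hPpos : P.PosDef)
    (ζ : ℝ → EuclideanSpace ℝ (Fin n))
    (V' : ℝ → ℝ)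
    (hderiv : ∀ t ∈ Set.Ico tS (t₀ + T),
      HasDerivAt (fun s => (inner ℝ (ζ s) ((Matrix.toEuclideanLin P) (ζ s)) : ℝ)) (V' t) t)
    (hbound : ∀ t ∈ Set.Ico tS (t₀ + T),
      V' t ≤ -ε₁ * μ t ^ (1 + m) * ‖ζ t‖ ^ 2) :
    (∀ t ∈ Set.Ico tS (t₀ + T),
      ‖ζ t‖ ≤ Real.sqrt ((⨆ i, hP.eigenvalues i) / (⨅ i, hP.eigenvalues i)) * ‖ζ tS‖ *
        Real.exp (-(ε₁ * T / (2 * m * (⨆ i, hP.eigenvalues i))) * (μ t ^ m - μ tS ^ m))) ∧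
    Tendsto ζ (nhdsWithin (t₀ + T) (Set.Iio (t₀ + T))) (nhds 0) := by
  haveI : Nonempty (Fin n) := ⟨⟨0, hn⟩⟩
  set lM := ⨆ i, hP.eigenvalues i with hlM
  set lmn := ⨅ i, hP.eigenvalues i with hlmn
  have heig : ∀ i, 0 < hP.eigenvalues i := fun i => hPpos.eigenvalues_pos i
  have hlmn_pos : 0 < lmn := by
    obtain ⟨i, hi⟩ := exists_eq_ciInf_of_finite (f := hP.eigenvalues)
    rw [hlmn, ← hi]; exact heig i
  have hlM_pos : 0 < lM :=
    lt_of_lt_of_le hlmn_pos (by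
      obtain ⟨i, hi⟩ := exists_eq_ciInf_of_finite (f := hP.eigenvalues)
      rw [hlmn, ← hi]; exact le_ciSup (Finite.bddAbove_range _) i)
  have hmR : (0:ℝ) < (m:ℝ) := by exact_mod_cast hm
  set V : ℝ → ℝ := fun s => (inner ℝ (ζ s) ((Matrix.toEuclideanLin P) (ζ s)) : ℝ) with hV
  set c : ℝ := ε₁ * T / (m * lM) with hc
  have hc_pos : 0 < c := div_pos (mul_pos hε₁ hT) (mul_pos hmR hlM_pos)
  set g : ℝ → ℝ := fun s => c * μ s ^ m with hg
  set F : ℝ → ℝ := fun s => V s * Real.exp (g s) with hF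
  have hden : ∀ t ∈ Set.Ico tS (t₀ + T), 0 < T + t₀ - t := by
    intro t ht; have := ht.2; linarith
  have hμpos : ∀ t ∈ Set.Ico tS (t₀ + T), 0 < μ t := by
    intro t ht; rw [hμ]; exact div_pos hT (hden t ht)
  have hμderiv : ∀ t ∈ Set.Ico tS (t₀ + T), HasDerivAt μ (μ t ^ 2 / T) t := by
    intro t ht
    have h1 : HasDerivAt (fun s => T + t₀ - s) (-1) t := by
      simpa using (hasDerivAt_id t).const_sub (T + t₀)
    have h2 : HasDerivAt (fun s => T / (T + t₀ - s))
        ((0 * (T + t₀ - t) - T * (-1)) / (T + t₀ - t) ^ 2) t :=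
      (hasDerivAt_const t T).div h1 (ne_of_gt (hden t ht))
    have hfun : μ = fun s => T / (T + t₀ - s) := funext hμ
    rw [hfun]
    convert h2 using 1
    have hd := ne_of_gt (hden t ht)
    field_simp
    ring
  have hgderiv : ∀ t ∈ Set.Ico tS (t₀ + T),
      HasDerivAt g (ε₁ / lM * μ t ^ (m + 1)) t := by
    intro t ht
    have h1 : HasDerivAt (fun s => μ s ^ m) ((m : ℝ) * μ t ^ (m - 1) * (μ t ^ 2 / T)) t :=
      (hμderiv t ht).pow m
    have h2 := h1.const_mul c
    refine h2.congr_deriv ?_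
    have hpow : μ t ^ (m - 1) * μ t ^ 2 = μ t ^ (m + 1) := by
      rw [← pow_add]
      congr 1
      omega
    rw [hc]
    field_simp
    rw [← hpow]
  set F' : ℝ → ℝ := fun t =>
    V' t * Real.exp (g t) + V t * (ε₁ / lM * μ t ^ (m + 1) * Real.exp (g t)) with hF'
  have hFderiv : ∀ t ∈ Set.Ico tS (t₀ + T), HasDerivAt F (F' t) t := by
    intro t ht
    have := (hderiv t ht).mul ((hgderiv t ht).exp)
    exact this.congr_deriv (by simp only [hF']; ring)
  have hF'nonpos : ∀ t ∈ Set.Ico tS (t₀ + T), F' t ≤ 0 := by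
    intro t ht
    have hq := (quad_form_bounds P hP (ζ t)).2
    have hμt := hμpos t ht
    have hμpow : 0 < μ t ^ (m + 1) := pow_pos hμt _
    have hkey : V t * (ε₁ / lM * μ t ^ (m + 1)) ≤ ε₁ * μ t ^ (m + 1) * ‖ζ t‖ ^ 2 := by
      have h1 : 0 ≤ ε₁ / lM * μ t ^ (m + 1) :=
        le_of_lt (mul_pos (div_pos hε₁ hlM_pos) hμpow)
      calc V t * (ε₁ / lM * μ t ^ (m + 1))
          ≤ (lM * ‖ζ t‖ ^ 2) * (ε₁ / lM * μ t ^ (m + 1)) :=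
            mul_le_mul_of_nonneg_right hq h1
        _ = ε₁ * μ t ^ (m + 1) * ‖ζ t‖ ^ 2 := by
            field_simp
    have hb := hbound t ht
    have hVsum : V' t + V t * (ε₁ / lM * μ t ^ (m + 1)) ≤ 0 := by
      have : (1 + m) = (m + 1) := by omega
      rw [this] at hb
      nlinarith [hb, hkey]
    have : F' t = (V' t + V t * (ε₁ / lM * μ t ^ (m + 1))) * Real.exp (g t) := by
      rw [hF']; ring
    rw [this]
    exact mul_nonpos_of_nonpos_of_nonneg hVsum (Real.exp_nonneg _)
  have hanti : AntitoneOn F (Set.Ico tS (t₀ + T)) := by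
    apply antitoneOn_of_deriv_nonpos (convex_Ico _ _)
    · exact fun t ht => (hFderiv t ht).continuousAt.continuousWithinAt
    · rw [interior_Ico]
      intro t ht
      exact ((hFderiv t (Ioo_subset_Ico_self ht)).differentiableAt).differentiableWithinAt
    · rw [interior_Ico]
      intro t ht
      exact ((hFderiv t (Ioo_subset_Ico_self ht)).deriv).trans_le
        (hF'nonpos t (Ioo_subset_Ico_self ht))
  have htS_mem : tS ∈ Set.Ico tS (t₀ + T) := ⟨le_refl _, htS.2⟩
  -- main pointwise bound
  have main : ∀ t ∈ Set.Ico tS (t₀ + T),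
      ‖ζ t‖ ≤ Real.sqrt (lM / lmn) * ‖ζ tS‖ *
        Real.exp (-(ε₁ * T / (2 * m * lM)) * (μ t ^ m - μ tS ^ m)) := by
    intro t ht
    have hFle : F t ≤ F tS := hanti htS_mem ht ht.1
    have hVle : V t ≤ V tS * Real.exp (g tS - g t) := by
      have h1 : V t * Real.exp (g t) ≤ V tS * Real.exp (g tS) := hFle
      have h2 := mul_le_mul_of_nonneg_right h1 (Real.exp_nonneg (-g t))
      calc V t = V t * Real.exp (g t) * Real.exp (-g t) := by
            rw [mul_assoc, ← Real.exp_add]; simp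
        _ ≤ V tS * Real.exp (g tS) * Real.exp (-g t) := h2
        _ = V tS * Real.exp (g tS - g t) := by
            rw [mul_assoc, ← Real.exp_add]; ring_nf
    have hlow := (quad_form_bounds P hP (ζ t)).1
    have hupS := (quad_form_bounds P hP (ζ tS)).2
    have hsq : ‖ζ t‖ ^ 2 ≤ (lM / lmn) * ‖ζ tS‖ ^ 2 * Real.exp (g tS - g t) := by
      have h3 : lmn * ‖ζ t‖ ^ 2 ≤ lM * ‖ζ tS‖ ^ 2 * Real.exp (g tS - g t) := by
        calc lmn * ‖ζ t‖ ^ 2 ≤ V t := hlow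
          _ ≤ V tS * Real.exp (g tS - g t) := hVle
          _ ≤ lM * ‖ζ tS‖ ^ 2 * Real.exp (g tS - g t) :=
              mul_le_mul_of_nonneg_right hupS (Real.exp_nonneg _)
      rw [div_mul_eq_mul_div, div_mul_eq_mul_div, le_div_iff₀ hlmn_pos]
      nlinarith [h3]
    set R := Real.sqrt (lM / lmn) * ‖ζ tS‖ *
        Real.exp (-(ε₁ * T / (2 * m * lM)) * (μ t ^ m - μ tS ^ m)) with hR
    have hR_nonneg : 0 ≤ R :=
      mul_nonneg (mul_nonneg (Real.sqrt_nonneg _) (norm_nonneg _)) (Real.exp_nonneg _)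
    have hR_sq : R ^ 2 = (lM / lmn) * ‖ζ tS‖ ^ 2 * Real.exp (g tS - g t) := by
      rw [hR]
      have h4 : Real.sqrt (lM / lmn) ^ 2 = lM / lmn :=
        Real.sq_sqrt (le_of_lt (div_pos hlM_pos hlmn_pos))
      have h5 : Real.exp (-(ε₁ * T / (2 * m * lM)) * (μ t ^ m - μ tS ^ m)) ^ 2
          = Real.exp (g tS - g t) := by
        rw [← Real.exp_nat_mul]
        congr 1
        rw [hg, hc]
        field_simp
        ring
      rw [mul_pow, mul_pow, h4, h5]
    have : ‖ζ t‖ ^ 2 ≤ R ^ 2 := by rw [hR_sq]; exact hsq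
    nlinarith [this, norm_nonneg (ζ t), hR_nonneg]
  refine ⟨main, ?_⟩
  -- tendsto part
  have hb_lt : tS < t₀ + T := htS.2
  have hmem : Set.Ioo tS (t₀ + T) ∈ nhdsWithin (t₀ + T) (Set.Iio (t₀ + T)) :=
    Ioo_mem_nhdsLT_of_mem ⟨hb_lt, le_refl _⟩
  have hden_t : Tendsto (fun t => T + t₀ - t) (nhdsWithin (t₀ + T) (Set.Iio (t₀ + T)))
      (nhdsWithin 0 (Set.Ioi 0)) := by
    apply tendsto_nhdsWithin_of_tendsto_nhds_of_eventually_within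
    · have : Tendsto (fun t => T + t₀ - t) (nhds (t₀ + T)) (nhds (T + t₀ - (t₀ + T))) :=
        (continuous_const.sub continuous_id).tendsto _
      have h0 : T + t₀ - (t₀ + T) = 0 := by ring
      rw [h0] at this
      exact this.mono_left nhdsWithin_le_nhds
    · filter_upwards [self_mem_nhdsWithin] with t ht
      simp only [Set.mem_Iio] at ht
      simp only [Set.mem_Ioi]
      linarith
  have hμ_t : Tendsto μ (nhdsWithin (t₀ + T) (Set.Iio (t₀ + T))) atTop := by
    have hfun : μ = fun s => T / (T + t₀ - s) := funext hμ
    rw [hfun]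
    have h1 : Tendsto (fun x : ℝ => T / x) (nhdsWithin 0 (Set.Ioi 0)) atTop := by
      simp only [div_eq_mul_inv]
      exact Tendsto.const_mul_atTop hT tendsto_inv_nhdsGT_zero
    exact h1.comp hden_t
  have hμm_t : Tendsto (fun t => μ t ^ m) (nhdsWithin (t₀ + T) (Set.Iio (t₀ + T))) atTop :=
    (tendsto_pow_atTop (by omega : m ≠ 0)).comp hμ_t
  have hΔ_t : Tendsto (fun t => μ t ^ m - μ tS ^ m)
      (nhdsWithin (t₀ + T) (Set.Iio (t₀ + T))) atTop :=
    tendsto_atTop_add_const_right _ (-(μ tS ^ m)) hμm_t |>.congr (fun t => by ring)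
  have hk_pos : 0 < ε₁ * T / (2 * m * lM) :=
    div_pos (mul_pos hε₁ hT) (by positivity)
  have hexp_t : Tendsto (fun t => Real.exp (-(ε₁ * T / (2 * m * lM)) * (μ t ^ m - μ tS ^ m)))
      (nhdsWithin (t₀ + T) (Set.Iio (t₀ + T))) (nhds 0) := by
    apply Real.tendsto_exp_atBot.comp
    have h1 : Tendsto (fun t => (ε₁ * T / (2 * m * lM)) * (μ t ^ m - μ tS ^ m))
        (nhdsWithin (t₀ + T) (Set.Iio (t₀ + T))) atTop :=
      Tendsto.const_mul_atTop hk_pos hΔ_t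
    have h2 : Tendsto (fun t => -((ε₁ * T / (2 * m * lM)) * (μ t ^ m - μ tS ^ m)))
        (nhdsWithin (t₀ + T) (Set.Iio (t₀ + T))) atBot := tendsto_neg_atBot_iff.mpr h1
    exact h2.congr (fun t => by ring)
  have hR_t : Tendsto (fun t => Real.sqrt (lM / lmn) * ‖ζ tS‖ *
      Real.exp (-(ε₁ * T / (2 * m * lM)) * (μ t ^ m - μ tS ^ m)))
      (nhdsWithin (t₀ + T) (Set.Iio (t₀ + T))) (nhds 0) := by
    have := hexp_t.const_mul (Real.sqrt (lM / lmn) * ‖ζ tS‖)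
    simpa [mul_assoc] using this
  have hnorm_t : Tendsto (fun t => ‖ζ t‖) (nhdsWithin (t₀ + T) (Set.Iio (t₀ + T))) (nhds 0) := by
    apply squeeze_zero' ?_ ?_ hR_t
    · filter_upwards with t using norm_nonneg _
    · filter_upwards [hmem] with t ht
      exact main t (Ioo_subset_Ico_self ht)
  exact tendsto_zero_iff_norm_tendsto_zero.2 hnorm_t
end
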